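/- Let x₁, ..., x₄ be four points in ℝ² in convex position admitting two triangulations t₁, t₂ of their convex hull, and for values Y = (y₁,...,y₄) let B(Y) = DF(t₁, Y) − DF(t₂, Y), where DF(t, Y) = Σ_{Δ ∈ t} (area of lifted triangle over Δ)²/area(Δ). Then B(Y) = c·L(Y)² for some constant c depending only on the points and some linear form L in Y; in particular B(Y) has constant sign, so the optimal triangulation does not depend on Y. -/

import Mathlib

/-- Counterclockwise orientation predicate for three planar points. -/
def ccw (A B C : EuclideanSpace ℝ (Fin 2)) : Prop :=
  0 < (B 0 - A 0) * (C 1 - A 1) - (B 1 - A 1) * (C 0 - A 0)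

/-- The area of the planar triangle `ABC`. -/
noncomputable def triArea (A B C : EuclideanSpace ℝ (Fin 2)) : ℝ :=
  |((B 0 - A 0) * (C 1 - A 1) - (B 1 - A 1) * (C 0 - A 0))| / 2

/-- The area of the lifted triangle in ℝ³ with vertices `(A, yA)`, `(B, yB)`, `(C, yC)`:
half the norm of the cross product of the lifted edge vectors. -/
noncomputable def liftArea (A B C : EuclideanSpace ℝ (Fin 2)) (yA yB yC : ℝ) : ℝ :=
  Real.sqrt (((B 1 - A 1) * (yC - yA) - (yB - yA) * (C 1 - A 1)) ^ 2 +
      ((yB - yA) * (C 0 - A 0) - (B 0 - A 0) * (yC - yA)) ^ 2 +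
      ((B 0 - A 0) * (C 1 - A 1) - (B 1 - A 1) * (C 0 - A 0)) ^ 2) / 2

/-- The discrete Dirichlet functional of a triangulation of the quadrilateral `PQRS`
into the two triangles `PQR`, `PRS`, with heights `y`. -/
noncomputable def DF2 (P Q R S : EuclideanSpace ℝ (Fin 2)) (yP yQ yR yS : ℝ) : ℝ :=
  liftArea P Q R yP yQ yR ^ 2 / triArea P Q R + liftArea P R S yP yR yS ^ 2 / triArea P R S

/-- For four points in convex position, the difference of the discrete Dirichlet
functionals of the two triangulations of their convex hull is `c·L(Y)²` for a constant
`c` and a linear form `L` in the heights `Y`; in particular the optimal triangulation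
does not depend on `Y`. -/
lemma liftArea_sq (A B C : EuclideanSpace ℝ (Fin 2)) (yA yB yC : ℝ) :
    liftArea A B C yA yB yC ^ 2 =
      (((B 1 - A 1) * (yC - yA) - (yB - yA) * (C 1 - A 1)) ^ 2 +
        ((yB - yA) * (C 0 - A 0) - (B 0 - A 0) * (yC - yA)) ^ 2 +
        ((B 0 - A 0) * (C 1 - A 1) - (B 1 - A 1) * (C 0 - A 0)) ^ 2) / 4 := by
  unfold liftArea
  rw [div_pow, Real.sq_sqrt (by positivity)]
  norm_num

lemma triArea_of_ccw (A B C : EuclideanSpace ℝ (Fin 2)) (h : ccw A B C) :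
    triArea A B C = ((B 0 - A 0) * (C 1 - A 1) - (B 1 - A 1) * (C 0 - A 0)) / 2 := by
  unfold triArea
  rw [abs_of_pos h]

lemma hdiv_aux (s d : ℝ) (hd : 0 < d) : (s + d ^ 2) / 4 / (d / 2) = s / (2 * d) + d / 2 := by
  field_simp
  ring

lemma com_aux (s1 s2 s3 s4 d1 d2 d3 d4 : ℝ) (h1 : d1 ≠ 0) (h2 : d2 ≠ 0) (h3 : d3 ≠ 0)
    (h4 : d4 ≠ 0) :
    s1 / (2 * d1) + s2 / (2 * d2) - s3 / (2 * d3) - s4 / (2 * d4) =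
      (s1 * (d2 * (d3 * d4)) + s2 * (d1 * (d3 * d4)) - s3 * (d1 * (d2 * d4)) -
        s4 * (d1 * (d2 * d3))) / (2 * (d1 * (d2 * (d3 * d4)))) := by
  field_simp

lemma rearr_aux (A B C D E F G H : ℝ) :
    A + B + (C + D) - (E + F + (G + H)) = (A + C - E - G) + (B + D - (F + H)) := by ring

lemma core12 (a0 a1 a2 a3 b0 b1 b2 b3 y0 y1 y2 y3 : ℝ) :
    (((b1 - b0) * (y2 - y0) - (y1 - y0) * (b2 - b0)) ^ 2 + ((y1 - y0) * (a2 - a0) - (a1 - a0) * (y2 - y0)) ^ 2) * (((a2 - a0) * (b3 - b0) - (b2 - b0) * (a3 - a0)) * (((a2 - a1) * (b3 - b1) - (b2 - b1) * (a3 - a1)) * ((a3 - a1) * (b0 - b1) - (b3 - b1) * (a0 - a1)))) + (((b2 - b0) * (y3 - y0) - (y2 - y0) * (b3 - b0)) ^ 2 + ((y2 - y0) * (a3 - a0) - (a2 - a0) * (y3 - y0)) ^ 2) * (((a1 - a0) * (b2 - b0) - (b1 - b0) * (a2 - a0)) * (((a2 - a1) * (b3 - b1) - (b2 - b1) * (a3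 - a1)) * ((a3 - a1) * (b0 - b1) - (b3 - b1) * (a0 - a1)))) - (((b2 - b1) * (y3 - y1) - (y2 - y1) * (b3 - b1)) ^ 2 + ((y2 - y1) * (a3 - a1) - (a2 - a1) * (y3 - y1)) ^ 2) * (((a1 - a0) * (b2 - b0) - (b1 - b0) * (a2 - a0)) * (((a2 - a0) * (b3 - b0) - (b2 - b0) * (a3 - a0)) * ((a3 - a1) * (b0 - b1) - (b3 - b1) * (a0 - a1)))) - (((b3 - b1) * (y0 - y1) - (y3 - y1) * (b0 - b1)) ^ 2 + ((y3 - y1) * (a0 - a1) - (a3 - a1) * (y0 - y1)) ^ 2) * (((a1 - a0) * (b2 - b0) - (b1 - b0) * (a2 - a0)) * (((a2 - a0) * (b3 - b0) - (b2 - b0) * (a3 - a0)) * ((a2 - a1) * (b3 - b1) - (b2 - b1) * (a3 - a1)))) = (-((a1 - a0) * ((b2 - b0) * ((a3 - a0) ^ 2 + (b3 - b0) ^ 2) - (b3 - b0) * ((a2 - a0) ^ 2 + (b2 - b0) ^ 2)) - (b1 - b0) * ((a2 - a0) * ((a3 - a0) ^ 2 + (b3 - b0) ^ 2) - (a3 -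 a0) * ((a2 - a0) ^ 2 + (b2 - b0) ^ 2)) + ((a1 - a0) ^ 2 + (b1 - b0) ^ 2) * ((a2 - a0) * (b3 - b0) - (a3 - a0) * (b2 - b0)))) * (((a2 - a1) * (b3 - b1) - (b2 - b1) * (a3 - a1)) * y0 - ((a2 - a0) * (b3 - b0) - (b2 - b0) * (a3 - a0)) * y1 + ((a1 - a0) * (b3 - b0) - (b1 - b0) * (a3 - a0)) * y2 - ((a1 - a0) * (b2 - b0) - (b1 - b0) * (a2 - a0)) * y3) ^ 2 := by
  obtain ⟨p1, rfl⟩ : ∃ p, a1 = a0 + p := ⟨a1 - a0, by ring⟩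
  obtain ⟨p2, rfl⟩ : ∃ p, a2 = a0 + p := ⟨a2 - a0, by ring⟩
  obtain ⟨p3, rfl⟩ : ∃ p, a3 = a0 + p := ⟨a3 - a0, by ring⟩
  obtain ⟨q1, rfl⟩ : ∃ p, b1 = b0 + p := ⟨b1 - b0, by ring⟩
  obtain ⟨q2, rfl⟩ : ∃ p, b2 = b0 + p := ⟨b2 - b0, by ring⟩
  obtain ⟨q3, rfl⟩ : ∃ p, b3 = b0 + p := ⟨b3 - b0, by ring⟩
  obtain ⟨w1, rfl⟩ : ∃ p, y1 = y0 + p := ⟨y1 - y0, by ring⟩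
  obtain ⟨w2, rfl⟩ : ∃ p, y2 = y0 + p := ⟨y2 - y0, by ring⟩
  obtain ⟨w3, rfl⟩ : ∃ p, y3 = y0 + p := ⟨y3 - y0, by ring⟩
  ring

set_option maxHeartbeats 1000000 in
theorem dirichlet_difference_is_square (x : Fin 4 → EuclideanSpace ℝ (Fin 2))
    (hconv : ccw (x 0) (x 1) (x 2) ∧ ccw (x 1) (x 2) (x 3) ∧
      ccw (x 2) (x 3) (x 0) ∧ ccw (x 3) (x 0) (x 1)) :
    ∃ (c : ℝ) (L : (Fin 4 → ℝ) →ₗ[ℝ] ℝ), ∀ Y : Fin 4 → ℝ,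
      DF2 (x 0) (x 1) (x 2) (x 3) (Y 0) (Y 1) (Y 2) (Y 3) -
        DF2 (x 1) (x 2) (x 3) (x 0) (Y 1) (Y 2) (Y 3) (Y 0) = c * L Y ^ 2 := by
  obtain ⟨h1, h2, h3, h4⟩ := hconv
  unfold ccw at h1 h2 h3 h4
  refine ⟨((-((x 1 0 - x 0 0) * ((x 2 1 - x 0 1) * ((x 3 0 - x 0 0) ^ 2 + (x 3 1 - x 0 1) ^ 2) - (x 3 1 - x 0 1) * ((x 2 0 - x 0 0) ^ 2 + (x 2 1 - x 0 1) ^ 2)) - (x 1 1 - x 0 1) * ((x 2 0 - x 0 0) * ((x 3 0 - x 0 0) ^ 2 + (x 3 1 - x 0 1) ^ 2) - (x 3 0 - x 0 0) * ((x 2 0 - x 0 0) ^ 2 + (x 2 1 - x 0 1) ^ 2)) + ((x 1 0 - x 0 0) ^ 2 + (x 1 1 - x 0 1) ^ 2) * ((x 2 0 - x 0 0) * (x 3 1 - x 0 1) - (x 3 0 - x 0 0) * (x 2 1 - x 0 1)))) / (2 * (((x 1 0 - x 0 0) * (x 2 1 - x 0 1) - (x 1 1 - x 0 1) * (x 2 0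 - x 0 0)) * (((x 2 0 - x 0 0) * (x 3 1 - x 0 1) - (x 2 1 - x 0 1) * (x 3 0 - x 0 0)) * (((x 2 0 - x 1 0) * (x 3 1 - x 1 1) - (x 2 1 - x 1 1) * (x 3 0 - x 1 0)) * ((x 3 0 - x 1 0) * (x 0 1 - x 1 1) - (x 3 1 - x 1 1) * (x 0 0 - x 1 0))))))),
    (((x 2 0 - x 1 0) * (x 3 1 - x 1 1) - (x 2 1 - x 1 1) * (x 3 0 - x 1 0))) • (LinearMap.proj 0 : (Fin 4 → ℝ) →ₗ[ℝ] ℝ)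
      - (((x 2 0 - x 0 0) * (x 3 1 - x 0 1) - (x 2 1 - x 0 1) * (x 3 0 - x 0 0))) • (LinearMap.proj 1 : (Fin 4 → ℝ) →ₗ[ℝ] ℝ)
      + (((x 1 0 - x 0 0) * (x 3 1 - x 0 1) - (x 1 1 - x 0 1) * (x 3 0 - x 0 0))) • (LinearMap.proj 2 : (Fin 4 → ℝ) →ₗ[ℝ] ℝ)
      - (((x 1 0 - x 0 0) * (x 2 1 - x 0 1) - (x 1 1 - x 0 1) * (x 2 0 - x 0 0))) • (LinearMap.proj 3 : (Fin 4 → ℝ) →ₗ[ℝ] ℝ), fun Y => ?_⟩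
  have e1 : (0:ℝ) < ((x 1 0 - x 0 0) * (x 2 1 - x 0 1) - (x 1 1 - x 0 1) * (x 2 0 - x 0 0)) := h1
  have e3 : (0:ℝ) < ((x 2 0 - x 1 0) * (x 3 1 - x 1 1) - (x 2 1 - x 1 1) * (x 3 0 - x 1 0)) := h2
  have e2 : (0:ℝ) < ((x 2 0 - x 0 0) * (x 3 1 - x 0 1) - (x 2 1 - x 0 1) * (x 3 0 - x 0 0)) := by
    have hr : ((x 2 0 - x 0 0) * (x 3 1 - x 0 1) - (x 2 1 - x 0 1) * (x 3 0 - x 0 0)) =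
        (x 3 0 - x 2 0) * (x 0 1 - x 2 1) - (x 3 1 - x 2 1) * (x 0 0 - x 2 0) := by ring
    linarith [h3, hr]
  have e4 : (0:ℝ) < ((x 3 0 - x 1 0) * (x 0 1 - x 1 1) - (x 3 1 - x 1 1) * (x 0 0 - x 1 0)) := by
    have hr : ((x 3 0 - x 1 0) * (x 0 1 - x 1 1) - (x 3 1 - x 1 1) * (x 0 0 - x 1 0)) =
        (x 0 0 - x 3 0) * (x 1 1 - x 3 1) - (x 0 1 - x 3 1) * (x 1 0 - x 3 0) := by ring
    linarith [h4, hr]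
  simp only [DF2, liftArea_sq, LinearMap.add_apply, LinearMap.sub_apply,
    LinearMap.smul_apply, LinearMap.proj_apply, smul_eq_mul]
  rw [triArea_of_ccw _ _ _ h1, triArea_of_ccw _ _ _ e2,
    triArea_of_ccw _ _ _ h2, triArea_of_ccw _ _ _ e4]
  rw [hdiv_aux _ _ e1, hdiv_aux _ _ e2, hdiv_aux _ _ e3, hdiv_aux _ _ e4]
  rw [rearr_aux]
  rw [com_aux _ _ _ _ _ _ _ _ e1.ne' e2.ne' e3.ne' e4.ne']
  have harea : ((x 1 0 - x 0 0) * (x 2 1 - x 0 1) - (x 1 1 - x 0 1) * (x 2 0 - x 0 0)) / 2 + ((x 2 0 - x 0 0) * (x 3 1 - x 0 1) - (x 2 1 - x 0 1) * (x 3 0 - x 0 0)) / 2 - (((x 2 0 - x 1 0) * (x 3 1 - x 1 1) - (x 2 1 - x 1 1) * (x 3 0 - x 1 0)) / 2 + ((x 3 0 - x 1 0) * (x 0 1 - x 1 1) - (x 3 1 - x 1 1) * (x 0 0 - x 1 0)) / 2) = 0 := by ring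
  have hNum := core12 (x 0 0) (x 1 0) (x 2 0) (x 3 0) (x 0 1) (x 1 1) (x 2 1) (x 3 1)
    (Y 0) (Y 1) (Y 2) (Y 3)
  rw [harea, hNum, add_zero, div_mul_eq_mul_div]
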